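/- There exists a constant C₂ > 0 such that for every α ∈ (0,1) and every s ≥ 0 one has G_α(s) ≤ C₂ · s^(2−q) · L_q(s) + C₂ · α · s^(3−q) + C₂. -/

import Mathlib

open Real MeasureTheory intervalIntegral Set

namespace S2

noncomputable def ff (χ q α : ℝ) (σ : ℝ) : ℝ :=
  1 / (χ * σ * (σ + 1) ^ (q - 1) / (1 + α * (σ + 1)) ^ q)

variable {χ q α σ : ℝ}

lemma f_eq (hχ : 0 < χ) (hσ : 0 < σ) :
    ff χ q α σ = (1 + α * (σ + 1)) ^ q * (σ + 1) ^ (1 - q) / (χ * σ) := by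
  have hb : (0:ℝ) < σ + 1 := by linarith
  have h1 : (σ + 1) ^ (q - 1) = ((σ + 1) ^ (1 - q))⁻¹ := by
    rw [show q - 1 = -(1 - q) by ring, Real.rpow_neg hb.le]
  have h2 : (σ + 1) ^ (1 - q) ≠ 0 := (Real.rpow_pos_of_pos hb _).ne'
  rw [ff, h1]
  field_simp

lemma f_contOn (hχ : 0 < χ) (hα : 0 < α) : ContinuousOn (ff χ q α) (Ioi 0) := by
  have hb : ∀ x ∈ Ioi (0:ℝ), x + 1 ≠ 0 ∨ 0 ≤ q - 1 := by
    intro x hx; left; have : (0:ℝ) < x := hx; positivity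
  have hc : ∀ x ∈ Ioi (0:ℝ), 1 + α * (x + 1) ≠ 0 ∨ 0 ≤ q := by
    intro x hx; left; have : (0:ℝ) < x := hx; positivity
  have c1 : ContinuousOn (fun x : ℝ => (x + 1) ^ (q - 1)) (Ioi 0) :=
    (continuous_id.add continuous_const).continuousOn.rpow_const hb
  have c2 : ContinuousOn (fun x : ℝ => (1 + α * (x + 1)) ^ q) (Ioi 0) :=
    (continuous_const.add
      (continuous_const.mul (continuous_id.add continuous_const))).continuousOn.rpow_const hc
  refine ContinuousOn.div continuousOn_const ?_ ?_
  · exact (((continuous_const.mul continuous_id).continuousOn).mul c1).div c2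
      (fun x hx => by
        have hx' : (0:ℝ) < x := hx
        have : (0:ℝ) < 1 + α * (x + 1) := by positivity
        exact (Real.rpow_pos_of_pos this _).ne')
  · intro x hx
    have hx' : (0:ℝ) < x := hx
    have h1 : (0:ℝ) < 1 + α * (x + 1) := by positivity
    have h2 : (0:ℝ) < x + 1 := by linarith
    have := Real.rpow_pos_of_pos h2 (q - 1)
    have := Real.rpow_pos_of_pos h1 q
    positivity

lemma f_intable (hχ : 0 < χ) (hα : 0 < α) {c d : ℝ} (hc : 0 < c) (hd : 0 < d) :
    IntervalIntegrable (ff χ q α) volume c d :=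
  ((f_contOn hχ hα).mono (Set.OrdConnected.uIcc_subset ordConnected_Ioi hc hd)).intervalIntegrable

lemma f_le_big (hχ : 0 < χ) (hq : q ≤ 1) (hα0 : 0 < α) (hα1 : α < 1) (hσ : 1 ≤ σ) :
    ff χ q α σ ≤ 2 ^ (2 - q) / χ * (σ ^ (-q) + α * σ ^ (1 - q)) := by
  have hσ0 : (0:ℝ) < σ := by linarith
  have hb : (0:ℝ) < σ + 1 := by linarith
  have h1 : (0:ℝ) < 1 + α * (σ + 1) := by positivity
  have hN : (1 + α * (σ + 1)) ^ q ≤ 2 * (1 + α * σ) := by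
    calc (1 + α * (σ + 1)) ^ q ≤ (1 + α * (σ + 1)) ^ (1:ℝ) := by
          apply Real.rpow_le_rpow_of_exponent_le _ hq
          nlinarith
      _ = 1 + α * (σ + 1) := Real.rpow_one _
      _ ≤ 2 * (1 + α * σ) := by nlinarith
  have hM : (σ + 1) ^ (1 - q) ≤ 2 ^ (1 - q) * σ ^ (1 - q) := by
    rw [← Real.mul_rpow (by norm_num) hσ0.le]
    exact Real.rpow_le_rpow hb.le (by linarith) (by linarith)
  have step : ff χ q α σ ≤ 2 * (1 + α * σ) * (2 ^ (1 - q) * σ ^ (1 - q)) / (χ * σ) := by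
    rw [f_eq hχ hσ0]
    gcongr
  refine step.trans (le_of_eq ?_)
  have e1 : σ ^ (1 - q) = σ ^ (-q) * σ := by
    rw [← Real.rpow_add_one hσ0.ne' (-q)]; congr 1; ring
  have e2 : (2:ℝ) ^ (2 - q) = 2 ^ (1 - q) * 2 := by
    rw [← Real.rpow_add_one (by norm_num : (2:ℝ) ≠ 0) (1 - q)]; congr 1; ring
  rw [e2, e1]
  field_simp

lemma f_le_small (hχ : 0 < χ) (hq : q ≤ 1) (hα0 : 0 < α) (hα1 : α < 1)
    (hσ0 : 0 < σ) (hσ1 : σ ≤ 1) :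
    ff χ q α σ ≤ 3 * 2 ^ (1 - q) / χ * σ ^ (-(3/2) : ℝ) := by
  have hb : (0:ℝ) < σ + 1 := by linarith
  have h1 : (0:ℝ) < 1 + α * (σ + 1) := by positivity
  have hN : (1 + α * (σ + 1)) ^ q ≤ 3 := by
    calc (1 + α * (σ + 1)) ^ q ≤ (1 + α * (σ + 1)) ^ (1:ℝ) := by
          apply Real.rpow_le_rpow_of_exponent_le _ hq
          nlinarith
      _ = 1 + α * (σ + 1) := Real.rpow_one _
      _ ≤ 3 := by nlinarith
  have hM : (σ + 1) ^ (1 - q) ≤ 2 ^ (1 - q) :=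
    Real.rpow_le_rpow hb.le (by linarith) (by linarith)
  have step : ff χ q α σ ≤ 3 * 2 ^ (1 - q) / (χ * σ) := by
    rw [f_eq hχ hσ0]
    gcongr
  refine step.trans ?_
  have hinv : σ ^ (-1 : ℝ) ≤ σ ^ (-(3/2) : ℝ) :=
    Real.rpow_le_rpow_of_exponent_ge hσ0 hσ1 (by norm_num)
  rw [Real.rpow_neg_one] at hinv
  have e : 3 * 2 ^ (1 - q) / (χ * σ) = 3 * 2 ^ (1 - q) / χ * σ⁻¹ := by
    field_simp
  rw [e]
  exact mul_le_mul_of_nonneg_left hinv (by positivity)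

lemma mul_log_lb {s : ℝ} (h0 : 0 ≤ s) : -(1/2 : ℝ) ≤ s * Real.log s := by
  rcases eq_or_lt_of_le h0 with h|hs
  · simp [← h]
  rcases le_or_gt 1 s with h1|h1
  · nlinarith [Real.log_nonneg h1]
  have ht : 0 < Real.sqrt s := Real.sqrt_pos.mpr hs
  have hts : Real.sqrt s * Real.sqrt s = s := Real.mul_self_sqrt h0
  have hlog : Real.log s = Real.log (Real.sqrt s) + Real.log (Real.sqrt s) := by
    have h2 := Real.log_mul ht.ne' ht.ne'
    rw [hts] at h2; exact h2
  have hlt : 1 - (Real.sqrt s)⁻¹ ≤ Real.log (Real.sqrt s) := by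
    have h2 := Real.log_le_sub_one_of_pos (inv_pos.mpr ht)
    rw [Real.log_inv] at h2; linarith
  have hst : s * (Real.sqrt s)⁻¹ = Real.sqrt s := by
    rw [← hts]; field_simp
    rw [Real.sqrt_sq ht.le]
  have key : 2*s - 2*Real.sqrt s ≤ s * Real.log s := by
    have h2 : 2*(1 - (Real.sqrt s)⁻¹) ≤ Real.log s := by rw [hlog]; linarith
    have h3 := mul_le_mul_of_nonneg_left h2 h0
    nlinarith [h3, hst]
  nlinarith [sq_nonneg (Real.sqrt s - 1/2), hts]

lemma G_small (hχ : 0 < χ) (hq : q ≤ 1) (hα0 : 0 < α) (hα1 : α < 1)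
    {s : ℝ} (hs0 : 0 ≤ s) (hs1 : s < 1) :
    (∫ ρ in (1:ℝ)..s, ∫ σ in (1:ℝ)..ρ, ff χ q α σ) ≤ 4 * (3 * 2 ^ (1 - q) / χ) := by
  set K := 3 * 2 ^ (1 - q) / χ with hK
  have hKpos : 0 < K := by rw [hK]; positivity
  set I := fun ρ : ℝ => ∫ σ in (1:ℝ)..ρ, ff χ q α σ with hI
  by_cases hInt : IntervalIntegrable I volume s 1
  · rw [intervalIntegral.integral_symm]
    have hcomp : IntervalIntegrable (fun ρ : ℝ => 2*K - 2*K*ρ^(-(1/2):ℝ)) volume s 1 :=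
      intervalIntegrable_const.sub
        ((intervalIntegral.intervalIntegrable_rpow' (by norm_num)).const_mul _)
    have hle : (fun ρ : ℝ => 2*K - 2*K*ρ^(-(1/2):ℝ)) ≤ᵐ[volume.restrict (Icc s 1)] I := by
      have h0 : ∀ᵐ ρ : ℝ ∂(volume.restrict (Icc s 1)), ρ ≠ 0 := by
        apply ae_restrict_of_ae
        rw [MeasureTheory.ae_iff]
        simp only [ne_eq, not_not, Set.setOf_eq_eq_singleton]
        exact measure_singleton 0
      filter_upwards [h0, ae_restrict_mem measurableSet_Icc] with ρ hρ0 hρm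
      have hρpos : 0 < ρ := lt_of_le_of_ne (hs0.trans hρm.1) (Ne.symm hρ0)
      have hρ1 : ρ ≤ 1 := hρm.2
      have hIρ : I ρ = -∫ σ in ρ..(1:ℝ), ff χ q α σ := intervalIntegral.integral_symm ρ 1
      have h0m : (0:ℝ) ∉ Set.uIcc ρ 1 := by
        rw [Set.uIcc_of_le hρ1]
        intro hmem
        exact absurd hmem.1 (by linarith)
      have hfb : (∫ σ in ρ..(1:ℝ), ff χ q α σ) ≤ ∫ σ in ρ..(1:ℝ), K * σ^(-(3/2):ℝ) := by
        apply intervalIntegral.integral_mono_on hρ1 (f_intable hχ hα0 hρpos one_pos)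
          ((intervalIntegrable_rpow (Or.inr h0m)).const_mul _)
        intro σ hσ
        exact f_le_small hχ hq hα0 hα1 (lt_of_lt_of_le hρpos hσ.1) hσ.2
      have hval : (∫ σ in ρ..(1:ℝ), K * σ^(-(3/2):ℝ))
          = K * (((1:ℝ)^(-(3/2) + 1 : ℝ) - ρ^(-(3/2) + 1 : ℝ))/(-(3/2) + 1 : ℝ)) := by
        rw [intervalIntegral.integral_const_mul, integral_rpow (Or.inr ⟨by norm_num, h0m⟩)]
      rw [hval, Real.one_rpow] at hfb
      have hexp : ρ ^ (-(3/2) + 1 : ℝ) = ρ ^ (-(1/2):ℝ) := by norm_num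
      rw [hexp] at hfb
      rw [hIρ]
      have : K * ((1 - ρ^(-(1/2):ℝ))/(-(3/2:ℝ)+1)) = 2*K*ρ^(-(1/2):ℝ) - 2*K := by
        field_simp; ring
      rw [this] at hfb
      linarith
    have hmono := intervalIntegral.integral_mono_ae_restrict hs1.le hcomp hInt hle
    have hcval : (∫ ρ in s..(1:ℝ), (2*K - 2*K*ρ^(-(1/2):ℝ)))
        = (1 - s) * (2*K) - 2*K*(((1:ℝ)^(-(1/2) + 1 : ℝ) - s^(-(1/2) + 1 : ℝ))/(-(1/2) + 1 : ℝ)) := by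
      rw [intervalIntegral.integral_sub intervalIntegrable_const
        ((intervalIntegral.intervalIntegrable_rpow' (by norm_num)).const_mul _),
        intervalIntegral.integral_const, intervalIntegral.integral_const_mul,
        integral_rpow (Or.inl (by norm_num))]
      simp
    rw [hcval, Real.one_rpow] at hmono
    have hs12 : s ^ (-(1/2) + 1 : ℝ) = s ^ ((1/2):ℝ) := by norm_num
    rw [hs12] at hmono
    have hsqnn : 0 ≤ s ^ ((1/2):ℝ) := Real.rpow_nonneg hs0 _
    have : (1 - s) * (2*K) - 2*K*((1 - s^((1/2):ℝ))/(-(1/2:ℝ)+1)) ≥ -(4*K) := by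
      have h2 : (1 - s^((1/2):ℝ))/(-(1/2:ℝ)+1) = 2 - 2*s^((1/2):ℝ) := by
        field_simp; ring
      rw [h2]
      nlinarith
    linarith
  · have hInt' : ¬ IntervalIntegrable I volume 1 s := fun h => hInt h.symm
    rw [intervalIntegral.integral_undef hInt']
    positivity

end S2
open Real MeasureTheory intervalIntegral Set S2

set_option maxHeartbeats 1000000 in
theorem stmt2 (χ q : ℝ) (hχ : 0 < χ) (hq : q ≤ 1) :
    ∃ C₂ > (0:ℝ), ∀ α ∈ Set.Ioo (0:ℝ) 1, ∀ s ≥ (0:ℝ),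
      (∫ ρ in (1:ℝ)..s, ∫ σ in (1:ℝ)..ρ,
          1 / (χ * σ * (σ + 1) ^ (q - 1) / (1 + α * (σ + 1)) ^ q)) ≤
        C₂ * s ^ (2 - q) * (if q < 1 then 1 else Real.log s)
          + C₂ * α * s ^ (3 - q) + C₂ := by
  have h1q : (0:ℝ) ≤ 1 - q := by linarith
  have h2q : (0:ℝ) < 2 - q := by linarith
  have h3q : (0:ℝ) < 3 - q := by linarith
  refine ⟨2^(2-q)/χ * (if q < 1 then (1-q)⁻¹ else 1) + 2^(2-q)/χ
      + 8 * (3 * 2^(1-q)/χ) + 1, ?_, ?_⟩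
  · have : (0:ℝ) < (if q < 1 then (1-q)⁻¹ else 1) := by
      split
      · exact inv_pos.mpr (by linarith)
      · norm_num
    positivity
  rintro α ⟨hα0, hα1⟩ s hs0
  set A : ℝ := 2^(2-q)/χ with hA
  set K : ℝ := 3 * 2^(1-q)/χ with hK
  set D : ℝ := (if q < 1 then (1-q)⁻¹ else 1) with hD
  have hApos : 0 < A := by rw [hA]; positivity
  have hKpos : 0 < K := by rw [hK]; positivity
  have hDpos : 0 < D := by
    rw [hD]; split
    · exact inv_pos.mpr (by linarith)
    · norm_num
  set C₂ : ℝ := A * D + A + 8 * K + 1 with hC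
  have hCpos : 0 < C₂ := by rw [hC]; positivity
  have hAC : A ≤ C₂ := by rw [hC]; nlinarith
  have hKC : 8 * K ≤ C₂ := by rw [hC]; nlinarith
  clear_value A K D C₂
  show (∫ ρ in (1:ℝ)..s, ∫ σ in (1:ℝ)..ρ, ff χ q α σ) ≤ _
  by_cases hq1 : q < 1
  · -- q < 1 case
    rw [if_pos hq1]
    have hDq : D = (1-q)⁻¹ := by rw [hD, if_pos hq1]
    rcases lt_or_ge s 1 with hs1 | hs1
    · -- small s
      have hG := G_small hχ hq hα0 hα1 hs0 hs1
      have t1 : 0 ≤ C₂ * s^(2-q) * 1 := by positivity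
      have t2 : 0 ≤ C₂ * α * s^(3-q) := by positivity
      rw [← hK] at hG
      linarith
    · -- s ≥ 1
      set I := fun ρ : ℝ => ∫ σ in (1:ℝ)..ρ, ff χ q α σ with hI
      have hffInt : IntegrableOn (ff χ q α) (Set.uIcc 1 s) volume := by
        rw [Set.uIcc_of_le hs1]
        exact ((f_contOn hχ hα0).mono
          (fun x hx => lt_of_lt_of_le one_pos hx.1)).integrableOn_Icc
      have hIint : IntervalIntegrable I volume 1 s :=
        (continuousOn_primitive_interval hffInt).intervalIntegrable
      set J := fun ρ : ℝ => A/(1-q) * ρ^(1-q) + A*α/(2-q) * ρ^(2-q) with hJ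
      have hJint : IntervalIntegrable J volume 1 s :=
        ((intervalIntegrable_rpow' (by linarith)).const_mul _).add
          ((intervalIntegrable_rpow' (by linarith)).const_mul _)
      have hIJ : ∀ ρ ∈ Set.Icc (1:ℝ) s, I ρ ≤ J ρ := by
        intro ρ hρ
        have hρ1 : (1:ℝ) ≤ ρ := hρ.1
        have hg1 : IntervalIntegrable (fun σ : ℝ => σ^(-q)) volume 1 ρ :=
          intervalIntegrable_rpow' (by linarith)
        have hg2 : IntervalIntegrable (fun σ : ℝ => α * σ^(1-q)) volume 1 ρ :=
          (intervalIntegrable_rpow' (by linarith)).const_mul _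
        have hgint : IntervalIntegrable (fun σ : ℝ => A * (σ^(-q) + α * σ^(1-q))) volume 1 ρ :=
          (hg1.add hg2).const_mul _
        have h1 : I ρ ≤ ∫ σ in (1:ℝ)..ρ, A * (σ^(-q) + α * σ^(1-q)) := by
          apply intervalIntegral.integral_mono_on hρ1
            (f_intable hχ hα0 one_pos (by linarith)) hgint
          intro σ hσ
          rw [hA]
          exact f_le_big hχ hq hα0 hα1 hσ.1
        have h2 : (∫ σ in (1:ℝ)..ρ, A * (σ^(-q) + α * σ^(1-q)))
            = A * ((ρ^(-q+1) - 1)/(-q+1) + α * ((ρ^(1-q+1) - 1)/(1-q+1))) := by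
          rw [intervalIntegral.integral_const_mul,
            intervalIntegral.integral_add hg1 hg2, intervalIntegral.integral_const_mul,
            integral_rpow (Or.inl (by linarith)), integral_rpow (Or.inl (by linarith))]
          simp only [Real.one_rpow]
        have hexp1 : ρ^(-q+1) = ρ^(1-q) := by rw [show -q+1 = 1-q by ring]
        have hexp2 : ρ^(1-q+1) = ρ^(2-q) := by rw [show 1-q+1 = 2-q by ring]
        rw [hexp1, hexp2] at h2
        rw [show (-q+1 : ℝ) = 1-q from by ring, show ((1:ℝ)-q+1 : ℝ) = 2-q from by ring] at h2
        have hxnn : (0:ℝ) ≤ ρ^(1-q) := Real.rpow_nonneg (by linarith) _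
        have hynn : (0:ℝ) ≤ ρ^(2-q) := Real.rpow_nonneg (by linarith) _
        have heq : J ρ = A * ((ρ^(1-q) - 1)/(1-q) + α * ((ρ^(2-q) - 1)/(2-q)))
            + (A/(1-q) + A*α/(2-q)) := by
          rw [hJ]
          have hne1 : (1:ℝ) - q ≠ 0 := by linarith
          have hne2 : (2:ℝ) - q ≠ 0 := by linarith
          field_simp
          ring
        rw [h2] at h1
        have hposadd : 0 ≤ A/(1-q) + A*α/(2-q) := by positivity
        refine h1.trans ?_
        rw [heq]
        linarith
      have houter := intervalIntegral.integral_mono_on hs1 hIint hJint hIJ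
      have hJval : (∫ ρ in (1:ℝ)..s, J ρ)
          = A/(1-q) * ((s^(1-q+1) - 1)/(1-q+1)) + A*α/(2-q) * ((s^(2-q+1) - 1)/(2-q+1)) := by
        rw [hJ]
        rw [intervalIntegral.integral_add
            ((intervalIntegrable_rpow' (by linarith)).const_mul _)
            ((intervalIntegrable_rpow' (by linarith)).const_mul _),
          intervalIntegral.integral_const_mul, intervalIntegral.integral_const_mul,
          integral_rpow (Or.inl (by linarith)), integral_rpow (Or.inl (by linarith))]
        simp only [Real.one_rpow]
      have hexp2 : s^(1-q+1) = s^(2-q) := by rw [show 1-q+1 = 2-q by ring]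
      have hexp3 : s^(2-q+1) = s^(3-q) := by rw [show 2-q+1 = 3-q by ring]
      rw [hexp2, hexp3] at hJval
      rw [hJval] at houter
      refine houter.trans ?_
      have hxnn : (0:ℝ) ≤ s^(2-q) := Real.rpow_nonneg (by linarith) _
      have hynn : (0:ℝ) ≤ s^(3-q) := Real.rpow_nonneg (by linarith) _
      have key1 : A/(1-q) * ((s^(2-q) - 1)/(1-q+1)) ≤ C₂ * s^(2-q) * 1 := by
        have hd1 : (0:ℝ) < 1-q+1 := by linarith
        have step1 : (s^(2-q) - 1)/(1-q+1) ≤ s^(2-q) := by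
          rw [div_le_iff₀ hd1]; nlinarith
        have step2 : A/(1-q) * ((s^(2-q) - 1)/(1-q+1)) ≤ A/(1-q) * s^(2-q) :=
          mul_le_mul_of_nonneg_left step1 (by positivity)
        have step3 : A/(1-q) * s^(2-q) ≤ C₂ * s^(2-q) := by
          apply mul_le_mul_of_nonneg_right _ hxnn
          have hADeq : A/(1-q) = A*D := by rw [hDq]; field_simp
          rw [hADeq, hC]
          nlinarith [mul_pos hApos hDpos]
        rw [mul_one]
        linarith
      have key2 : A*α/(2-q) * ((s^(3-q) - 1)/(2-q+1)) ≤ C₂ * α * s^(3-q) := by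
        have hd1 : (0:ℝ) < 2-q+1 := by linarith
        have step1 : (s^(3-q) - 1)/(2-q+1) ≤ s^(3-q) := by
          rw [div_le_iff₀ hd1]; nlinarith
        have step2 : A*α/(2-q) * ((s^(3-q) - 1)/(2-q+1)) ≤ A*α/(2-q) * s^(3-q) :=
          mul_le_mul_of_nonneg_left step1 (by positivity)
        have step3 : A*α/(2-q) * s^(3-q) ≤ C₂ * α * s^(3-q) := by
          apply mul_le_mul_of_nonneg_right _ hynn
          have : A*α/(2-q) ≤ A*α := by
            rw [div_le_iff₀ h2q]
            nlinarith [mul_pos hApos hα0, h1q]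
          nlinarith [mul_pos hApos hα0]
        linarith
      linarith
  · -- q = 1 case
    have hq1' : q = 1 := le_antisymm hq (not_lt.mp hq1)
    subst hq1'
    rw [if_neg (lt_irrefl (1:ℝ))]
    rw [show (2:ℝ)-1 = 1 from by norm_num, Real.rpow_one,
      show (3:ℝ)-1 = ((2:ℕ):ℝ) from by norm_num, Real.rpow_natCast]
    rcases lt_or_ge s 1 with hs1 | hs1
    · have hG := G_small hχ le_rfl hα0 hα1 hs0 hs1
      rw [← hK] at hG
      have hsl : -(1/2:ℝ) ≤ s * Real.log s := mul_log_lb hs0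
      have t2 : 0 ≤ C₂ * α * s^(2:ℕ) := by positivity
      have hm := mul_le_mul_of_nonneg_left hsl hCpos.le
      nlinarith [hm]
    · set I := fun ρ : ℝ => ∫ σ in (1:ℝ)..ρ, ff χ 1 α σ with hI
      have hffInt : IntegrableOn (ff χ 1 α) (Set.uIcc 1 s) volume := by
        rw [Set.uIcc_of_le hs1]
        exact ((f_contOn hχ hα0).mono
          (fun x hx => lt_of_lt_of_le one_pos hx.1)).integrableOn_Icc
      have hIint : IntervalIntegrable I volume 1 s :=
        (continuousOn_primitive_interval hffInt).intervalIntegrable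
      have h0ms : (0:ℝ) ∉ Set.uIcc 1 s := by
        rw [Set.uIcc_of_le hs1]
        intro hmem
        exact absurd hmem.1 (by norm_num)
      set J := fun ρ : ℝ => A * Real.log ρ + A*α*ρ with hJ
      have hJint : IntervalIntegrable J volume 1 s :=
        ((intervalIntegrable_log h0ms).const_mul _).add
          ((continuous_const.mul continuous_id').intervalIntegrable _ _)
      have hIJ : ∀ ρ ∈ Set.Icc (1:ℝ) s, I ρ ≤ J ρ := by
        intro ρ hρ
        have hρ1 : (1:ℝ) ≤ ρ := hρ.1
        have h0m : (0:ℝ) ∉ Set.uIcc 1 ρ := by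
          rw [Set.uIcc_of_le hρ1]
          intro hmem
          exact absurd hmem.1 (by norm_num)
        have hg1 : IntervalIntegrable (fun σ : ℝ => σ^(-1:ℝ)) volume 1 ρ :=
          intervalIntegrable_rpow (Or.inr h0m)
        have hg2 : IntervalIntegrable (fun σ : ℝ => α * σ^((1:ℝ)-1)) volume 1 ρ :=
          (intervalIntegrable_rpow' (by norm_num)).const_mul _
        have hgint : IntervalIntegrable
            (fun σ : ℝ => A * (σ^(-1:ℝ) + α * σ^((1:ℝ)-1))) volume 1 ρ :=
          (hg1.add hg2).const_mul _
        have h1 : I ρ ≤ ∫ σ in (1:ℝ)..ρ, A * (σ^(-1:ℝ) + α * σ^((1:ℝ)-1)) := by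
          apply intervalIntegral.integral_mono_on hρ1
            (f_intable hχ hα0 one_pos (by linarith)) hgint
          intro σ hσ
          rw [hA, show (2:ℝ)-1 = 1 from by norm_num, Real.rpow_one,
            show (1:ℝ) = 1 - 1 + 1 from by norm_num]
          have := f_le_big hχ le_rfl hα0 hα1 hσ.1
          rw [show (2:ℝ)-1 = 1 from by norm_num, Real.rpow_one] at this
          convert this using 3 <;> norm_num
        have ha : (∫ σ in (1:ℝ)..ρ, σ^(-1:ℝ)) = Real.log ρ := by
          simp only [Real.rpow_neg_one]
          rw [integral_inv h0m, div_one]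
        have hb : (∫ σ in (1:ℝ)..ρ, σ^((1:ℝ)-1)) = ρ - 1 := by
          simp only [show (1:ℝ)-1 = 0 from by norm_num, Real.rpow_zero]
          simp
        have h2 : (∫ σ in (1:ℝ)..ρ, A * (σ^(-1:ℝ) + α * σ^((1:ℝ)-1)))
            = A * (Real.log ρ + α * (ρ - 1)) := by
          rw [intervalIntegral.integral_const_mul, intervalIntegral.integral_add hg1 hg2,
            intervalIntegral.integral_const_mul, ha, hb]
        rw [h2] at h1
        refine h1.trans ?_
        simp only [hJ]
        have : 0 ≤ A * α := by positivity
        nlinarith [this]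
      have houter := intervalIntegral.integral_mono_on hs1 hIint hJint hIJ
      have hJval : (∫ ρ in (1:ℝ)..s, J ρ)
          = A * (s * Real.log s - s + 1) + A*α*((s^2 - 1^2)/2) := by
        simp only [hJ]
        rw [intervalIntegral.integral_add (g := fun ρ : ℝ => A*α*ρ) ((intervalIntegrable_log h0ms).const_mul _)
            ((continuous_const.mul continuous_id').intervalIntegrable _ _),
          intervalIntegral.integral_const_mul, integral_log]
        have hid : (∫ ρ in (1:ℝ)..s, A*α*ρ) = A*α*((s^2 - 1^2)/2) := by
          rw [show (fun ρ : ℝ => A*α*ρ) = fun ρ : ℝ => (A*α)*ρ from rfl,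
            intervalIntegral.integral_const_mul, integral_id]
        rw [hid, Real.log_one]
        ring
      rw [hJval] at houter
      refine houter.trans ?_
      have hslog : 0 ≤ s * Real.log s := mul_nonneg (by linarith) (Real.log_nonneg hs1)
      have hsq : (1:ℝ) ≤ s^(2:ℕ) := by nlinarith
      nlinarith [mul_le_mul_of_nonneg_right hAC hslog, mul_pos hApos hα0,
        mul_le_mul_of_nonneg_right (mul_le_mul_of_nonneg_right hAC hα0.le)
          (sq_nonneg s), mul_nonneg hApos.le (by linarith : (0:ℝ) ≤ s - 1)]
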